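/- (Least action principle, minimization form) Let N be an abelian network with total alphabet A, and suppose N halts on input x.q with x ∈ ℕ^A. Then for each letter a ∈ A, the odometer coordinate satisfies [x.q]_a = min{ |w'|_a : w' is a complete execution for x.q }; that is, every complete legal execution achieves, in every coordinate simultaneously, the minimum number of processings over all complete executions. -/

import Mathlib

/-- The letter-count vector `|w| ∈ ℕ^A` of a word `w ∈ A^*`. -/
def lc {A : Type*} [DecidableEq A] (w : List A) : A → ℕ := fun a => w.count a

/-- An abelian-network *data* structure on a directed graph with vertex set `V`, edge set `E`
(with source and target maps, allowing loops and multiple edges), total alphabet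
`A = ⊔_v A_v` (the letter `a` belongs to the alphabet of the vertex `loc a`), and
state space `Q v` for the processor at vertex `v`.  The abelian hypothesis on the
processors is the separate predicate `AbelianNetwork.IsAbelian`. -/
structure AbelianNetwork (V E A : Type*) (Q : V → Type*) [DecidableEq V] [DecidableEq A] where
  /-- source of an edge -/
  src : E → V
  /-- target of an edge -/
  tgt : E → V
  /-- the vertex whose input alphabet contains the letter `a` -/
  loc : A → V
  /-- the (finitely many) outgoing edges of each vertex -/
  outEdges : V → Finset E
  mem_outEdges : ∀ (e : E) (v : V), e ∈ outEdges v ↔ src e = v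
  /-- single-letter transition function `T_v(a, ·)` of the processor at `v = loc a` -/
  trans : (a : A) → Q (loc a) → Q (loc a)
  /-- message-passing function: the word sent along the edge `e` (with `src e = loc a`)
  when the processor at `loc a` processes the letter `a` in state `q` -/
  msg : (e : E) → (a : A) → Q (loc a) → List A
  /-- letters sent along `e` belong to the alphabet of the target of `e` -/
  msg_tgt : ∀ (e : E) (a : A) (q : Q (loc a)), src e = loc a → ∀ b ∈ msg e a q, loc b = tgt e

namespace AbelianNetwork

variable {V E A : Type*} {Q : V → Type*} [DecidableEq V] [DecidableEq A]
variable (N : AbelianNetwork V E A Q)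

/-- The map `t_a : Q → Q` updating the `loc a` coordinate by `T_{loc a}(a, ·)` and
fixing all other coordinates. -/
def tact (a : A) (q : ∀ v, Q v) : ∀ v, Q v :=
  Function.update q (N.loc a) (N.trans a (q (N.loc a)))

/-- `t_w = t_{w_r} ∘ ⋯ ∘ t_{w_1}` for a word `w = w_1 ⋯ w_r`. -/
def tword (w : List A) (q : ∀ v, Q v) : ∀ v, Q v :=
  w.foldl (fun q a => N.tact a q) q

/-- The word sent along the edge `e` when the letters of `w` are processed in order,
starting from the global state `q`.  (Extends the message-passing functions to words.) -/
def msgword (e : E) : List A → (∀ v, Q v) → List A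
  | [], _ => []
  | a :: w, q =>
      (if N.src e = N.loc a then N.msg e a (q (N.loc a)) else []) ++ msgword e w (N.tact a q)

/-- `N(a, q_{loc a}) ∈ ℕ^A`: the vector counting the letters produced when the processor at
`loc a` processes the letter `a`, summed over the outgoing edges of `loc a`. -/
def Nletter (a : A) (q : ∀ v, Q v) : A → ℕ := fun b =>
  ∑ e ∈ N.outEdges (N.loc a), (N.msg e a (q (N.loc a))).count b

/-- `N(w, q) = ∑_i N(w_i, q^{i-1}_{v(i)})` for a word `w = w_1 ⋯ w_r`. -/
def Nword : List A → (∀ v, Q v) → A → ℕ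
  | [], _ => fun _ => 0
  | a :: w, q => fun b => N.Nletter a q b + Nword w (N.tact a q) b

/-- The network is *abelian*: permuting a word input to a single processor does not change
the resulting state and changes each output word only by permuting its letters. -/
def IsAbelian : Prop :=
  ∀ (v : V) (w w' : List A), (∀ a ∈ w, N.loc a = v) → (∀ a ∈ w', N.loc a = v) →
    (w : Multiset A) = (w' : Multiset A) →
    ∀ q : ∀ u, Q u,
      N.tword w q = N.tword w' q ∧
      ∀ e : E, ((N.msgword e w q : Multiset A) = (N.msgword e w' q : Multiset A))

/-- The state transition `π_a(x.q) = (x - 1_a + N(a, q_{loc a})).t_a(q)` of the whole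
network, viewed as a single automaton with states `x.q ∈ ℤ^A × Q`. -/
def piLetter (a : A) (s : (A → ℤ) × (∀ v, Q v)) : (A → ℤ) × (∀ v, Q v) :=
  (fun b => s.1 b - (if b = a then 1 else 0) + (N.Nletter a s.2 b : ℤ), N.tact a s.2)

/-- `π_w = π_{w_r} ∘ ⋯ ∘ π_{w_1}`. -/
def piWord (w : List A) (s : (A → ℤ) × (∀ v, Q v)) : (A → ℤ) × (∀ v, Q v) :=
  w.foldl (fun s a => N.piLetter a s) s

/-- The word `w` is a *legal execution* from `x.q`: each letter is a legal move
(`x_a ≥ 1`) from the state obtained by executing the previous letters. -/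
def Legal : List A → ((A → ℤ) × (∀ v, Q v)) → Prop
  | [], _ => True
  | a :: w, s => 1 ≤ s.1 a ∧ Legal w (N.piLetter a s)

/-- The word `w` is a *complete execution* from `x.q`: after executing `w`,
no letters remain to be processed. -/
def Complete (w : List A) (s : (A → ℤ) × (∀ v, Q v)) : Prop :=
  ∀ a : A, (N.piWord w s).1 a ≤ 0

/-- A canonical word with letter-count vector `u ∈ ℕ^A`. -/
noncomputable def vecWord [Fintype A] (u : A → ℕ) : List A :=
  (Finset.univ : Finset A).toList.flatMap fun a => List.replicate (u a) a

/-- `N(u, q)` for a vector `u ∈ ℕ^A`, defined as `N(w, q)` for a word `w` with `|w| = u`. -/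
noncomputable def Nvec [Fintype A] (u : A → ℕ) (q : ∀ v, Q v) : A → ℕ := N.Nword (vecWord u) q

end AbelianNetwork

namespace AbelianNetwork

variable {V E A : Type*} {Q : V → Type*} [DecidableEq V] [DecidableEq A]
variable (N : AbelianNetwork V E A Q)

lemma tact_apply_ne (a : A) (q : ∀ v, Q v) {v : V} (h : v ≠ N.loc a) :
    N.tact a q v = q v := Function.update_of_ne h _ _

lemma Nletter_tact_ne {a b : A} (h : N.loc a ≠ N.loc b) (q : ∀ v, Q v) :
    N.Nletter a (N.tact b q) = N.Nletter a q := by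
  unfold Nletter
  rw [N.tact_apply_ne b q h]

lemma tact_comm (hN : N.IsAbelian) (a b : A) (q : ∀ v, Q v) :
    N.tact a (N.tact b q) = N.tact b (N.tact a q) := by
  by_cases h : N.loc a = N.loc b
  · obtain ⟨ht, -⟩ := hN (N.loc a) [b, a] [a, b]
      (by intro x hx; simp at hx; rcases hx with rfl | rfl; exacts [h.symm, rfl])
      (by intro x hx; simp at hx; rcases hx with rfl | rfl; exacts [rfl, h.symm])
      (Multiset.coe_eq_coe.mpr (List.Perm.swap a b [])) q
    simpa [tword] using ht
  · unfold tact
    rw [Function.update_of_ne h, Function.update_of_ne (Ne.symm h)]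
    exact Function.update_comm (Ne.symm h) _ _ _

lemma Nletter_pair (hN : N.IsAbelian) (a b : A) (h : N.loc a = N.loc b) (q : ∀ v, Q v)
    (c : A) :
    N.Nletter a q c + N.Nletter b (N.tact a q) c
      = N.Nletter b q c + N.Nletter a (N.tact b q) c := by
  obtain ⟨-, hm⟩ := hN (N.loc a) [a, b] [b, a]
    (by intro x hx; simp at hx; rcases hx with rfl | rfl; exacts [rfl, h.symm])
    (by intro x hx; simp at hx; rcases hx with rfl | rfl; exacts [h.symm, rfl])
    (Multiset.coe_eq_coe.mpr (List.Perm.swap b a [])) q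
  have hout : N.outEdges (N.loc b) = N.outEdges (N.loc a) := by rw [h]
  have expand1 : ∀ e ∈ N.outEdges (N.loc a),
      (N.msg e a (q (N.loc a))).count c + (N.msg e b ((N.tact a q) (N.loc b))).count c
        = (N.msgword e [a, b] q).count c := by
    intro e he
    have hsa : N.src e = N.loc a := (N.mem_outEdges e _).1 he
    simp [msgword, hsa, hsa.trans h, h]
  have expand2 : ∀ e ∈ N.outEdges (N.loc a),
      (N.msg e b (q (N.loc b))).count c + (N.msg e a ((N.tact b q) (N.loc a))).count c
        = (N.msgword e [b, a] q).count c := by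
    intro e he
    have hsa : N.src e = N.loc a := (N.mem_outEdges e _).1 he
    simp [msgword, hsa, hsa.trans h, h]
  have key : ∀ e ∈ N.outEdges (N.loc a),
      (N.msgword e [a, b] q).count c = (N.msgword e [b, a] q).count c := by
    intro e _
    have := congrArg (Multiset.count c) (hm e)
    simpa using this
  unfold Nletter
  rw [hout, ← Finset.sum_add_distrib, ← Finset.sum_add_distrib,
    Finset.sum_congr rfl expand1, Finset.sum_congr rfl expand2]
  exact Finset.sum_congr rfl key

lemma piLetter_comm (hN : N.IsAbelian) (a b : A) (s : (A → ℤ) × (∀ v, Q v)) :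
    N.piLetter a (N.piLetter b s) = N.piLetter b (N.piLetter a s) := by
  unfold piLetter
  refine Prod.ext (funext fun c => ?_) (N.tact_comm hN a b s.2)
  simp only
  by_cases h : N.loc a = N.loc b
  · have := N.Nletter_pair hN b a h.symm s.2 c
    omega
  · rw [N.Nletter_tact_ne h, N.Nletter_tact_ne (Ne.symm h)]
    ring

lemma piWord_cons (a : A) (w : List A) (s : (A → ℤ) × (∀ v, Q v)) :
    N.piWord (a :: w) s = N.piWord w (N.piLetter a s) := rfl

lemma piWord_perm (hN : N.IsAbelian) {w w' : List A} (hp : w.Perm w')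
    (s : (A → ℤ) × (∀ v, Q v)) : N.piWord w s = N.piWord w' s := by
  induction hp generalizing s with
  | nil => rfl
  | cons a _ ih => rw [piWord_cons, piWord_cons, ih]
  | swap a b l =>
      rw [piWord_cons, piWord_cons, piWord_cons, piWord_cons,
        N.piLetter_comm hN a b]
  | trans _ _ ih1 ih2 => rw [ih1, ih2]

lemma piWord_fst_ge (w : List A) (s : (A → ℤ) × (∀ v, Q v)) (a : A) :
    s.1 a - w.count a ≤ (N.piWord w s).1 a := by
  induction w generalizing s with
  | nil => simp [piWord]
  | cons b w ih =>
      rw [piWord_cons]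
      refine le_trans ?_ (ih (N.piLetter b s))
      have h1 : (0 : ℤ) ≤ (N.Nletter b s.2 a : ℤ) := Int.ofNat_nonneg _
      have hc : (((b :: w).count a : ℤ)) = (w.count a : ℤ) + (if a = b then 1 else 0) := by
        by_cases hba : a = b
        · subst hba; rw [List.count_cons_self, if_pos rfl]; push_cast; ring
        · rw [List.count_cons_of_ne (Ne.symm hba), if_neg hba]; ring
      rw [hc]
      simp only [piLetter]
      by_cases hba : a = b
      · simp only [hba, if_pos rfl]
        omega
      · simp only [if_neg hba]
        omega

/-- Least action: the letter counts of a legal word are dominated by those of any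
complete word from the same state. -/
lemma legal_count_le_complete (hN : N.IsAbelian) (w : List A)
    (s : (A → ℤ) × (∀ v, Q v)) (hl : N.Legal w s) (w' : List A)
    (hc : N.Complete w' s) (a : A) : w.count a ≤ w'.count a := by
  induction w generalizing s w' with
  | nil => simp
  | cons b u ih =>
      obtain ⟨hb1, hbl⟩ := hl
      -- b must occur in w'
      have hbw' : b ∈ w' := by
        by_contra hb
        have h0 := N.piWord_fst_ge w' s b
        have := hc b
        rw [List.count_eq_zero_of_not_mem hb] at h0
        omega
      have hperm : w'.Perm (b :: w'.erase b) := List.perm_cons_erase hbw'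
      have hc' : N.Complete (w'.erase b) (N.piLetter b s) := by
        intro c
        have := hc c
        rwa [N.piWord_perm hN hperm, piWord_cons] at this
      have hle := ih (N.piLetter b s) hbl (w'.erase b) hc'
      have hb1' : 0 < w'.count b := List.count_pos_iff.mpr hbw'
      by_cases hab : a = b
      · subst hab
        rw [List.count_erase_self] at hle
        rw [List.count_cons_self]
        omega
      · rw [List.count_erase_of_ne hab] at hle
        rw [List.count_cons_of_ne (Ne.symm hab)]
        omega

end AbelianNetwork

/-- **Least action principle, minimization form.** Suppose the abelian network `N` halts on
input `x.q` with `x ∈ ℕ^A`, and let `w` be a complete legal execution (so `[x.q] = |w|`).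
Then for each letter `a ∈ A`, the odometer coordinate `[x.q]_a = |w|_a` is the minimum of
`|w'|_a` over all complete executions `w'` for `x.q`: every complete legal execution
achieves, in every coordinate simultaneously, the minimum number of processings over all
complete executions. -/
theorem AbelianNetwork.odometer_isLeast {V E A : Type*} {Q : V → Type*}
    [DecidableEq V] [DecidableEq A] (N : AbelianNetwork V E A Q) (hN : N.IsAbelian)
    (x : A → ℕ) (q : ∀ v, Q v) (w : List A)
    (hwl : N.Legal w (fun a => (x a : ℤ), q))
    (hwc : N.Complete w (fun a => (x a : ℤ), q)) :
    ∀ a : A, IsLeast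
      {n : ℕ | ∃ w' : List A, N.Complete w' (fun b => (x b : ℤ), q) ∧ lc w' a = n}
      (lc w a) := by
  intro a
  constructor
  · exact ⟨w, hwc, rfl⟩
  · rintro n ⟨w', hw'c, rfl⟩
    exact N.legal_count_le_complete hN w _ hwl w' hw'c a
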